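/- Fix an integer k ≥ 1 and a real α > 0. The kernel of L = a^k − α^k I, i.e. the set of ψ ∈ H_k with a^k ψ = α^k ψ, equals the k-dimensional complex subspace H_{α,k} = span{|α_m⟩ : m = 1,…,k}, where α_m = α e^{2iπm/k} and |α_m⟩ is the coherent state of amplitude α_m. Equivalently, ψ = ∑_n ψ_n|n⟩ ∈ H_k satisfies Lψ = 0 if and only if its coefficients satisfy the recurrence ψ_{n+k} = α^k ψ_n / √((n+k)(n+k−1)⋯(n+1)) for all n ≥ 0, and every such ψ is a linear combination of the k coherent states |α_1⟩, …, |α_k⟩. -/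

import Mathlib

noncomputable section

open scoped BigOperators ComplexConjugate

local notation "⟪" x ", " y "⟫" => @inner ℂ _ _ x y

/-- The Hilbert space `H = ℓ²(ℕ, ℂ)` of the quantum harmonic oscillator. -/
abbrev H : Type := lp (fun _ : ℕ => ℂ) 2

/-- The Fock (number) basis vector `|n⟩`. -/
def fock (n : ℕ) : H := lp.single 2 n 1

/-- Coefficientwise action of the annihilation operator `a`:
`(aψ)_n = √(n+1) ψ_{n+1}`. -/
def acoef (ψ : ℕ → ℂ) : ℕ → ℂ := fun n => (Real.sqrt (n + 1) : ℝ) * ψ (n + 1)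

/-- Coefficientwise action of the creation operator `a†`:
`(a†ψ)_n = √n ψ_{n-1}` for `n ≥ 1`, and `(a†ψ)_0 = 0`. -/
def adcoef (ψ : ℕ → ℂ) : ℕ → ℂ :=
  fun n => if n = 0 then 0 else (Real.sqrt n : ℝ) * ψ (n - 1)

/-- Coefficientwise action of `L = a^k − α^k I`. -/
def Lcoef (k : ℕ) (α : ℝ) (ψ : ℕ → ℂ) : ℕ → ℂ :=
  fun n => acoef^[k] ψ n - (α : ℂ) ^ k * ψ n

/-- Coefficientwise action of `L† = (a†)^k − α^k I`. -/
def Ldcoef (k : ℕ) (α : ℝ) (ψ : ℕ → ℂ) : ℕ → ℂ :=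
  fun n => adcoef^[k] ψ n - (α : ℂ) ^ k * ψ n

/-- Coefficientwise action of `L†L`. -/
def LdLcoef (k : ℕ) (α : ℝ) (ψ : ℕ → ℂ) : ℕ → ℂ := Ldcoef k α (Lcoef k α ψ)

/-- `ψ ∈ H_j`, the domain `{ψ : ∑ n^j |ψ_n|² < ∞}` (inside `ℓ²`). -/
def inHdom (j : ℕ) (ψ : ℕ → ℂ) : Prop :=
  Summable (fun n => ‖ψ n‖ ^ 2) ∧ Summable (fun n : ℕ => (n : ℝ) ^ j * ‖ψ n‖ ^ 2)

/-- Falling factorial `n(n−1)⋯(n−k+1)` (zero when `n < k`). -/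
def fallR (k n : ℕ) : ℝ := ∏ j ∈ Finset.range k, ((n : ℝ) - j)

/-- Rising product `(n+1)(n+2)⋯(n+k)`. -/
def riseR (k n : ℕ) : ℝ := ∏ j ∈ Finset.Icc 1 k, ((n : ℝ) + j)

/-- Eigenvalue `m(n)` of the commutator `M = [a^k, (a†)^k]` on `|n⟩`. -/
def mval (k n : ℕ) : ℝ := riseR k n - fallR k n

/-- The vector `L†|m⟩ = √((m+1)⋯(m+k)) |m+k⟩ − α^k |m⟩`. -/
def ldagFock (k : ℕ) (α : ℝ) (m : ℕ) : H :=
  ((Real.sqrt (riseR k m) : ℝ) : ℂ) • fock (m + k) - ((α : ℂ) ^ k) • fock m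

/-- The vector `L†L|m⟩`. -/
def ldlFock (k : ℕ) (α : ℝ) (m : ℕ) : H :=
  ((fallR k m + α ^ (2 * k) : ℝ) : ℂ) • fock m
    - ((α ^ k * Real.sqrt (fallR k m) : ℝ) : ℂ) • fock (m - k)
    - ((α ^ k * Real.sqrt (riseR k m) : ℝ) : ℂ) • fock (m + k)

/-- A bounded operator is a Hermitian trace-class operator (member of `K¹(H)`) when it is
self-adjoint and admits a spectral decomposition `T = ∑ c_μ |e_μ⟩⟨e_μ|` along a Hilbert basis
with absolutely summable real eigenvalues. -/
def IsHermitianTraceClass (T : H →L[ℂ] H) : Prop :=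
  IsSelfAdjoint T ∧
    ∃ (e : HilbertBasis ℕ ℂ H) (c : ℕ → ℝ),
      Summable (fun μ => |c μ|) ∧
      ∀ x : H, T x = ∑' μ, ((c μ : ℂ) * ⟪e μ, x⟫) • e μ

/-- Trace norm `tr|T| = ∑ |c_μ|` of a Hermitian trace-class operator. -/
def traceNorm (T : H →L[ℂ] H) : ℝ :=
  sInf {s | ∃ (e : HilbertBasis ℕ ℂ H) (c : ℕ → ℝ),
    Summable (fun μ => |c μ|) ∧
    (∀ x : H, T x = ∑' μ, ((c μ : ℂ) * ⟪e μ, x⟫) • e μ) ∧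
    s = ∑' μ, |c μ|}

/-- Trace of an operator, computed in the Fock basis. -/
def traceOf (T : H →L[ℂ] H) : ℝ := ∑' n, (⟪fock n, T (fock n)⟫).re

/-- Positive semidefinite bounded operator. -/
def IsPosSemidef (T : H →L[ℂ] H) : Prop :=
  IsSelfAdjoint T ∧ ∀ x : H, 0 ≤ (⟪x, T x⟫).re

/-- Loewner order on Hermitian operators. -/
def opLE (A B : H →L[ℂ] H) : Prop := IsPosSemidef (B - A)

/-- `(g, d)` is a spectral decomposition of `L†L`: a Hilbert basis of eigenvectors `g_μ`,
lying in the domain `H_{2k}`, with nonnegative eigenvalues `d_μ`. -/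
def IsSpectralBasis (k : ℕ) (α : ℝ) (g : HilbertBasis ℕ ℂ H) (d : ℕ → ℝ) : Prop :=
  (∀ μ, 0 ≤ d μ) ∧
    ∀ μ, inHdom (2 * k) (g μ) ∧
      ∀ n, LdLcoef k α (g μ) n = (d μ : ℂ) * (g μ) n

/-- Matrix entry `⟨g_μ| SρS |g_ν⟩ = √(1+d_μ)√(1+d_ν) ⟨g_μ|ρ|g_ν⟩` of `SρS`
in the eigenbasis `g` of `L†L`, where `S = √(I + L†L)`. -/
def SEntry (g : HilbertBasis ℕ ℂ H) (d : ℕ → ℝ) (ρ : H →L[ℂ] H) (μ ν : ℕ) : ℂ :=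
  ((Real.sqrt (1 + d μ) * Real.sqrt (1 + d ν) : ℝ) : ℂ) * ⟪g μ, ρ (g ν)⟫

/-- Membership in `K_L(H) = {ρ ∈ K¹(H) : tr|SρS| < ∞}`: `ρ` is Hermitian trace class and the
operator with matrix `SρS` is Hermitian trace class. -/
def memKL (g : HilbertBasis ℕ ℂ H) (d : ℕ → ℝ) (ρ : H →L[ℂ] H) : Prop :=
  IsHermitianTraceClass ρ ∧
    ∃ T : H →L[ℂ] H, IsHermitianTraceClass T ∧
      ∀ μ ν, ⟪g μ, T (g ν)⟫ = SEntry g d ρ μ ν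

/-- The norm `‖ρ‖_L = tr|SρS|` on `K_L(H)`. -/
def Lnorm (g : HilbertBasis ℕ ℂ H) (d : ℕ → ℝ) (ρ : H →L[ℂ] H) : ℝ :=
  sInf {s | ∃ T : H →L[ℂ] H, IsHermitianTraceClass T ∧
    (∀ μ ν, ⟪g μ, T (g ν)⟫ = SEntry g d ρ μ ν) ∧ s = traceNorm T}

/-- Fock-basis matrix entry `⟨m| 𝔄(ρ) |n⟩` of
`𝔄(ρ) = (L†Lρ + ρL†L)/2 − LρL†` (weak formulation). -/
def Amat (k : ℕ) (α : ℝ) (ρ : H →L[ℂ] H) (m n : ℕ) : ℂ :=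
  (1 / 2 : ℂ) * (⟪ldlFock k α m, ρ (fock n)⟫ + ⟪fock m, ρ (ldlFock k α n)⟫)
    - ⟪ldagFock k α m, ρ (ldagFock k α n)⟫

/-- `ρ` belongs to the domain of the superoperator `𝔄` on `K_L(H)`, with value `A = 𝔄(ρ)`. -/
def inDomA (k : ℕ) (α : ℝ) (g : HilbertBasis ℕ ℂ H) (d : ℕ → ℝ)
    (ρ A : H →L[ℂ] H) : Prop :=
  memKL g d ρ ∧ memKL g d A ∧ ∀ m n, ⟪fock m, A (fock n)⟫ = Amat k α ρ m n

/-- `(ρ, A)` is a `C¹` trajectory of the Lindblad master equation `dρ/dt = −𝔄(ρ)` in `K_L(H)`: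
`ρ(t)` lies in the domain of `𝔄` with `A(t) = 𝔄(ρ(t))`, the derivative of `ρ` in the
`‖·‖_L`-norm equals `−A(t)`, and `t ↦ A(t)` is `‖·‖_L`-continuous. -/
def IsLindbladTrajectory (k : ℕ) (α : ℝ) (g : HilbertBasis ℕ ℂ H) (d : ℕ → ℝ)
    (ρ A : ℝ → (H →L[ℂ] H)) : Prop :=
  (∀ t, 0 ≤ t → inDomA k α g d (ρ t) (A t)) ∧
  (∀ t, 0 ≤ t → Filter.Tendsto
      (fun h : ℝ => Lnorm g d (((1 / h : ℝ) : ℂ) • (ρ (t + h) - ρ t) + A t))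
      (nhdsWithin 0 {h : ℝ | h ≠ 0 ∧ 0 ≤ t + h}) (nhds 0)) ∧
  (∀ t, 0 ≤ t → Filter.Tendsto (fun s => Lnorm g d (A s - A t))
      (nhdsWithin t (Set.Ici 0)) (nhds 0))

/-- The coherent state amplitude `α_m = α e^{2iπm/k}` for `m = 1, …, k` (indexed by `Fin k`). -/
def catAmp (k : ℕ) (α : ℝ) (m : Fin k) : ℂ :=
  (α : ℂ) * Complex.exp (2 * Real.pi * Complex.I * (m.1 + 1) / k)

/-- Coefficients `e^{−|β|²/2} βⁿ/√(n!)` of the coherent state `|β⟩`. -/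
def cohCoeff (β : ℂ) : ℕ → ℂ :=
  fun n => ((Real.exp (-(‖β‖) ^ 2 / 2) : ℝ) : ℂ) * β ^ n
    / ((Real.sqrt (n.factorial) : ℝ) : ℂ)

open Classical in
/-- The coherent state `|β⟩ ∈ H`. -/
def coh (β : ℂ) : H :=
  if h : Memℓp (cohCoeff β) 2 then (⟨cohCoeff β, h⟩ : H) else 0

/-- The `k`-dimensional subspace `H_{α,k}` spanned by the coherent states `|α_m⟩`. -/
def catSpan (k : ℕ) (α : ℝ) : Submodule ℂ H :=
  Submodule.span ℂ (Set.range fun m : Fin k => coh (catAmp k α m))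

/-- The rank-one operator `|m⟩⟨n|`. -/
def ketbra (m n : ℕ) : H →L[ℂ] H := (innerSL ℂ (fock n)).smulRight (fock m)

/-- Coefficientwise action of `(a†)^k + a^k`. -/
def xcoef (k : ℕ) (ψ : ℕ → ℂ) : ℕ → ℂ :=
  fun n => adcoef^[k] ψ n + acoef^[k] ψ n

/-- Coefficientwise action of the inverse resolvent
`R_λ^{-1} = (I + λ(N(N−1)⋯(N−k+1) + α^{2k}))^{-1}`. -/
def rinvCoeff (k : ℕ) (α l : ℝ) (ψ : ℕ → ℂ) : ℕ → ℂ :=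
  fun n => (((1 + l * (fallR k n + α ^ (2 * k)))⁻¹ : ℝ) : ℂ) * ψ n

/-- Diagonal Fock-matrix entry `⟨n| 𝔏_L(ξ) |n⟩` of the Lindblad generator
`𝔏_L(ξ) = LξL† − ½L†Lξ − ½ξL†L` (weak formulation). -/
def lindDiag (k : ℕ) (α : ℝ) (ξ : H →L[ℂ] H) (n : ℕ) : ℂ :=
  ⟪ldagFock k α n, ξ (ldagFock k α n)⟫
    - (1 / 2 : ℂ) * ⟪ldlFock k α n, ξ (fock n)⟫
    - (1 / 2 : ℂ) * ⟪fock n, ξ (ldlFock k α n)⟫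

/-- The (unnormalized) `k`-legged Schrödinger cat state
`v_ℓ = ∑_{m=1}^k e^{2iπℓm/k} |α_m⟩`. -/
def catVec (k : ℕ) (α : ℝ) (l : ℤ) : H :=
  ∑ m ∈ Finset.Icc 1 k,
    Complex.exp (2 * Real.pi * Complex.I * l * m / k) •
      coh ((α : ℂ) * Complex.exp (2 * Real.pi * Complex.I * m / k))

/-- The vector `(I + λL†L)/2 |m⟩`. -/
def resFock (k : ℕ) (α l : ℝ) (m : ℕ) : H :=
  (1 / 2 : ℂ) • (fock m + ((l : ℝ) : ℂ) • ldlFock k α m)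

/-- Weak (matrix-element) formulation of the Sylvester-type equation
`((I+λL†L)/2)ρ + ρ((I+λL†L)/2) = f + rλ LρL†`. -/
def sylvEq (k : ℕ) (α l r : ℝ) (f ρ : H →L[ℂ] H) : Prop :=
  ∀ m n, ⟪resFock k α l m, ρ (fock n)⟫ + ⟪fock m, ρ (resFock k α l n)⟫
    = ⟪fock m, f (fock n)⟫ + ((r * l : ℝ) : ℂ) * ⟪ldagFock k α m, ρ (ldagFock k α n)⟫

/-- `m(n)` as an integer: `(n+1)(n+2)⋯(n+k) − n(n−1)⋯(n−k+1)`. -/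
def mInt (k n : ℕ) : ℤ :=
  (∏ j ∈ Finset.Icc 1 k, ((n : ℤ) + j)) - ∏ j ∈ Finset.range k, ((n : ℤ) - j)



section KernelAux

open Complex

lemma riseR_pos (k n : ℕ) : 0 < riseR k n := by
  apply Finset.prod_pos
  intro j hj
  have h1 : 1 ≤ j := (Finset.mem_Icc.mp hj).1
  have h1' : (1 : ℝ) ≤ (j : ℝ) := by exact_mod_cast h1
  have h2 : (0 : ℝ) ≤ (n : ℝ) := Nat.cast_nonneg n
  linarith

lemma riseR_succ (k n : ℕ) : riseR (k + 1) n = riseR k n * ((n : ℝ) + (k + 1)) := by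
  unfold riseR
  rw [Finset.prod_Icc_succ_top (by omega : 1 ≤ k + 1)]
  push_cast
  ring

lemma acoef_iter (k : ℕ) : ∀ (ψ : ℕ → ℂ) (n : ℕ),
    acoef^[k] ψ n = ((Real.sqrt (riseR k n) : ℝ) : ℂ) * ψ (n + k) := by
  induction k with
  | zero => intro ψ n; simp [riseR]
  | succ k ih =>
    intro ψ n
    rw [Function.iterate_succ, Function.comp_apply, ih (acoef ψ) n]
    show ((Real.sqrt (riseR k n) : ℝ) : ℂ) * (((Real.sqrt ((n + k : ℕ) + 1) : ℝ)) *
        ψ (n + k + 1)) = _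
    rw [riseR_succ, Real.sqrt_mul (riseR_pos k n).le]
    have harg : ((n + k : ℕ) : ℝ) + 1 = (n : ℝ) + ((k : ℝ) + 1) := by push_cast; ring
    rw [harg]
    have hidx : n + (k + 1) = n + k + 1 := rfl
    rw [hidx]
    push_cast
    ring

lemma Lcoef_eq (k : ℕ) (α : ℝ) (ψ : ℕ → ℂ) (n : ℕ) :
    Lcoef k α ψ n = ((Real.sqrt (riseR k n) : ℝ) : ℂ) * ψ (n + k) - (α : ℂ) ^ k * ψ n := by
  rw [Lcoef, acoef_iter]

lemma sqrtR_ne (k n : ℕ) : ((Real.sqrt (riseR k n) : ℝ) : ℂ) ≠ 0 := by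
  rw [Complex.ofReal_ne_zero, Real.sqrt_ne_zero']
  exact riseR_pos k n

lemma lcoef_zero_iff (k : ℕ) (α : ℝ) (ψ : ℕ → ℂ) :
    (∀ n, Lcoef k α ψ n = 0) ↔
      ∀ n, ψ (n + k) = (α : ℂ) ^ k * ψ n / ((Real.sqrt (riseR k n) : ℝ) : ℂ) := by
  refine forall_congr' fun n => ?_
  rw [Lcoef_eq, sub_eq_zero, eq_div_iff (sqrtR_ne k n)]
  constructor <;> intro h <;> linear_combination h

lemma zero_of_rec (k : ℕ) (hk : 1 ≤ k) (α : ℝ) (ψ : ℕ → ℂ)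
    (hrec : ∀ n, ψ (n + k) = (α : ℂ) ^ k * ψ n / ((Real.sqrt (riseR k n) : ℝ) : ℂ))
    (h0 : ∀ i, i < k → ψ i = 0) : ∀ n, ψ n = 0 := by
  intro n
  induction n using Nat.strong_induction_on with
  | _ n ih =>
    rcases lt_or_ge n k with h | h
    · exact h0 n h
    · have hnk : n = (n - k) + k := by omega
      rw [hnk, hrec, ih (n - k) (by omega)]
      simp

lemma sqrt_factorial_pos (n : ℕ) : 0 < Real.sqrt n.factorial :=
  Real.sqrt_pos.mpr (by exact_mod_cast n.factorial_pos)

lemma cohCoeff_succ (β : ℂ) (m : ℕ) :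
    cohCoeff β (m + 1) = β * cohCoeff β m / ((Real.sqrt ((m : ℝ) + 1) : ℝ) : ℂ) := by
  unfold cohCoeff
  rw [Nat.factorial_succ]
  have h1 : (((m + 1) * m.factorial : ℕ) : ℝ) = ((m : ℝ) + 1) * (m.factorial : ℝ) := by
    push_cast; ring
  rw [h1, Real.sqrt_mul (by positivity)]
  have h2 : ((Real.sqrt ((m : ℝ) + 1) : ℝ) : ℂ) ≠ 0 := by
    rw [Complex.ofReal_ne_zero, Real.sqrt_ne_zero']; positivity
  have h3 : ((Real.sqrt (m.factorial : ℝ) : ℝ) : ℂ) ≠ 0 := by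
    rw [Complex.ofReal_ne_zero]; exact (sqrt_factorial_pos m).ne'
  push_cast
  field_simp
  ring

lemma cohCoeff_rec (β : ℂ) (k n : ℕ) :
    cohCoeff β (n + k) = β ^ k * cohCoeff β n / ((Real.sqrt (riseR k n) : ℝ) : ℂ) := by
  induction k with
  | zero => simp [riseR]
  | succ k ih =>
    have hidx : n + (k + 1) = (n + k) + 1 := rfl
    rw [hidx, cohCoeff_succ, ih, riseR_succ, Real.sqrt_mul (riseR_pos k n).le]
    have harg : ((n + k : ℕ) : ℝ) + 1 = (n : ℝ) + ((k : ℝ) + 1) := by push_cast; ring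
    rw [harg]
    have h1 : ((Real.sqrt (riseR k n) : ℝ) : ℂ) ≠ 0 := sqrtR_ne k n
    have h2 : ((Real.sqrt ((n : ℝ) + ((k : ℝ) + 1)) : ℝ) : ℂ) ≠ 0 := by
      rw [Complex.ofReal_ne_zero, Real.sqrt_ne_zero']; positivity
    push_cast
    rw [pow_succ]
    field_simp

lemma norm_cohCoeff_sq (β : ℂ) (n : ℕ) :
    ‖cohCoeff β n‖ ^ 2
      = Real.exp (-(‖β‖) ^ 2) * ((‖β‖ ^ 2) ^ n / n.factorial) := by
  unfold cohCoeff
  rw [norm_div, norm_mul, Complex.norm_real, Complex.norm_real, norm_pow,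
    Real.norm_of_nonneg (Real.exp_pos _).le, Real.norm_of_nonneg (Real.sqrt_nonneg _)]
  rw [div_pow, mul_pow, Real.sq_sqrt (by positivity), ← pow_mul, mul_comm n 2, pow_mul,
    pow_two, ← Real.exp_add]
  have h : -‖β‖ ^ 2 / 2 + -‖β‖ ^ 2 / 2 = -‖β‖ ^ 2 := by ring
  rw [h]
  ring

lemma cohCoeff_memℓp (β : ℂ) : Memℓp (cohCoeff β) 2 := by
  apply memℓp_gen
  have hs : Summable (fun n : ℕ =>
      Real.exp (-(‖β‖) ^ 2) * ((‖β‖ ^ 2) ^ n / n.factorial)) :=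
    (Real.summable_pow_div_factorial _).mul_left _
  refine (hs.congr fun n => ?_)
  rw [← norm_cohCoeff_sq]
  have : ((2 : ENNReal).toReal) = ((2 : ℕ) : ℝ) := by norm_num
  rw [this, Real.rpow_natCast]

lemma coh_apply (β : ℂ) (n : ℕ) : (coh β : ℕ → ℂ) n = cohCoeff β n := by
  rw [coh, dif_pos (cohCoeff_memℓp β)]

lemma catAmp_pow (k : ℕ) (hk : 1 ≤ k) (α : ℝ) (m : Fin k) :
    (catAmp k α m) ^ k = (α : ℂ) ^ k := by
  unfold catAmp
  rw [mul_pow, ← Complex.exp_nat_mul]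
  have hkz : (k : ℂ) ≠ 0 := Nat.cast_ne_zero.mpr (by omega)
  have harg : (k : ℂ) * (2 * (Real.pi : ℂ) * Complex.I * ((m : ℕ) + 1) / k)
      = (((m : ℕ) + 1 : ℤ) : ℂ) * (2 * (Real.pi : ℂ) * Complex.I) := by
    push_cast
    field_simp
  rw [harg, Complex.exp_int_mul_two_pi_mul_I, mul_one]

lemma abs_catAmp (k : ℕ) (α : ℝ) (hα : 0 < α) (m : Fin k) :
    ‖catAmp k α m‖ = α := by
  unfold catAmp
  have harg : 2 * (Real.pi : ℂ) * Complex.I * ((m : ℕ) + 1) / k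
      = ((2 * Real.pi * ((m : ℕ) + 1) / k : ℝ) : ℂ) * Complex.I := by
    push_cast; ring
  rw [norm_mul, harg, Complex.norm_exp_ofReal_mul_I, mul_one, Complex.norm_real,
    Real.norm_of_nonneg hα.le]

lemma cohCoeff_eq_scalar (β : ℂ) (n : ℕ) :
    cohCoeff β n
      = ((Real.exp (-(‖β‖) ^ 2 / 2) / Real.sqrt n.factorial : ℝ) : ℂ) * β ^ n := by
  unfold cohCoeff
  push_cast
  ring

/-- The Vandermonde-type matrix of coherent-state coefficients. -/
def Vmat (k : ℕ) (α : ℝ) : Matrix (Fin k) (Fin k) ℂ :=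
  fun n m => cohCoeff (catAmp k α m) (n : ℕ)

lemma catAmp_injective (k : ℕ) (α : ℝ) (hα : 0 < α) :
    Function.Injective (catAmp k α) := by
  intro a b hab
  have hk : 0 < k := a.pos
  unfold catAmp at hab
  have hαz : (α : ℂ) ≠ 0 := by exact_mod_cast hα.ne'
  have h := mul_left_cancel₀ hαz hab
  rw [Complex.exp_eq_exp_iff_exists_int] at h
  obtain ⟨n, hn⟩ := h
  have hkz : (k : ℂ) ≠ 0 := by exact_mod_cast hk.ne'
  have h2 : (2 * (Real.pi : ℂ) * Complex.I) ≠ 0 := by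
    simp [Real.pi_ne_zero, Complex.I_ne_zero]
  field_simp at hn
  have h3 : ((a : ℕ) : ℂ) + 1 = ((b : ℕ) : ℂ) + 1 + (n : ℂ) * (k : ℂ) :=
    by linear_combination hn
  have h4 : ((a : ℕ) : ℤ) + 1 = ((b : ℕ) : ℤ) + 1 + n * (k : ℤ) := by exact_mod_cast h3
  have hk' : (0 : ℤ) < (k : ℤ) := by exact_mod_cast hk
  have hub : ((a : ℕ) : ℤ) < (k : ℤ) := by exact_mod_cast a.2
  have hub' : ((b : ℕ) : ℤ) < (k : ℤ) := by exact_mod_cast b.2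
  have hlb : (0 : ℤ) ≤ ((a : ℕ) : ℤ) := by positivity
  have hlb' : (0 : ℤ) ≤ ((b : ℕ) : ℤ) := by positivity
  have hn0 : n = 0 := by
    rcases lt_trichotomy n 0 with h | h | h
    · have h5 : n * (k : ℤ) ≤ (-1) * (k : ℤ) :=
        mul_le_mul_of_nonneg_right (by omega) hk'.le
      linarith
    · exact h
    · have h5 : (1 : ℤ) * (k : ℤ) ≤ n * (k : ℤ) :=
        mul_le_mul_of_nonneg_right (by omega) hk'.le
      linarith
  rw [hn0] at h4
  have : (a : ℕ) = (b : ℕ) := by omega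
  exact Fin.ext this

lemma Vmat_det_isUnit (k : ℕ) (α : ℝ) (hα : 0 < α) : IsUnit (Vmat k α).det := by
  rw [isUnit_iff_ne_zero]
  have hVeq : Vmat k α
      = Matrix.diagonal (fun n : Fin k =>
          ((Real.exp (-α ^ 2 / 2) / Real.sqrt (n : ℕ).factorial : ℝ) : ℂ))
        * (Matrix.vandermonde (catAmp k α)).transpose := by
    ext n m
    rw [Matrix.diagonal_mul, Matrix.transpose_apply, Matrix.vandermonde_apply]
    show Vmat k α n m = _ * catAmp k α m ^ (n : ℕ)
    rw [Vmat]
    show cohCoeff (catAmp k α m) (n : ℕ) = _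
    rw [cohCoeff_eq_scalar, abs_catAmp k α hα]
  rw [hVeq, Matrix.det_mul, Matrix.det_transpose, Matrix.det_diagonal]
  apply mul_ne_zero
  · apply Finset.prod_ne_zero_iff.mpr
    intro n _
    rw [Complex.ofReal_ne_zero]
    have := sqrt_factorial_pos (n : ℕ)
    positivity
  · rw [Matrix.det_vandermonde_ne_zero_iff]
    exact catAmp_injective k α hα

lemma sum_coh_apply (k : ℕ) (α : ℝ) (c : Fin k → ℂ) (n : ℕ) :
    (((∑ m, c m • coh (catAmp k α m) : H)) : ℕ → ℂ) n
      = ∑ m, c m * cohCoeff (catAmp k α m) n := by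
  rw [lp.coeFn_sum, Finset.sum_apply]
  refine Finset.sum_congr rfl fun m _ => ?_
  rw [lp.coeFn_smul, Pi.smul_apply, coh_apply, smul_eq_mul]

lemma coh_mem_ker (k : ℕ) (hk : 1 ≤ k) (α : ℝ) (m : Fin k) (n : ℕ) :
    Lcoef k α (coh (catAmp k α m)) n = 0 := by
  rw [Lcoef_eq, coh_apply, coh_apply, cohCoeff_rec, catAmp_pow k hk α m,
    mul_div_cancel₀ _ (sqrtR_ne k n), sub_self]

lemma coh_linearIndependent (k : ℕ) (α : ℝ) (hα : 0 < α) :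
    LinearIndependent ℂ (fun m : Fin k => coh (catAmp k α m)) := by
  rw [Fintype.linearIndependent_iff]
  intro g hg
  have hunit := Vmat_det_isUnit k α hα
  have h1 : (Vmat k α).mulVec g = 0 := by
    funext i
    have hcg := congrArg (fun x : H => (x : ℕ → ℂ) (i : ℕ)) hg
    simp only [lp.coeFn_zero, Pi.zero_apply] at hcg
    rw [sum_coh_apply] at hcg
    simp only [Pi.zero_apply]
    rw [Matrix.mulVec, dotProduct, ← hcg]
    refine Finset.sum_congr rfl fun m _ => ?_
    show Vmat k α i m * g m = g m * cohCoeff (catAmp k α m) (i : ℕ)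
    show cohCoeff (catAmp k α m) (i : ℕ) * g m = _
    ring
  have hg0 : g = 0 := by
    calc g = (1 : Matrix (Fin k) (Fin k) ℂ).mulVec g := by rw [Matrix.one_mulVec]
    _ = ((Vmat k α)⁻¹ * Vmat k α).mulVec g := by rw [Matrix.nonsing_inv_mul _ hunit]
    _ = (Vmat k α)⁻¹.mulVec ((Vmat k α).mulVec g) := by rw [Matrix.mulVec_mulVec]
    _ = 0 := by rw [h1, Matrix.mulVec_zero]
  intro i
  rw [hg0]
  rfl

end KernelAux

/-- The kernel of `L = a^k − α^k I` in `H_k` equals the `k`-dimensional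
subspace `H_{α,k}` spanned by the coherent states `|α e^{2iπm/k}⟩`; equivalently `Lψ = 0` iff
the coefficients satisfy `ψ_{n+k} = α^k ψ_n / √((n+k)⋯(n+1))`. -/
theorem kernel_of_L_is_cat_span (k : ℕ) (hk : 1 ≤ k) (α : ℝ) (hα : 0 < α) :
    (∀ ψ : H, inHdom k ψ →
      (((∀ n, Lcoef k α ψ n = 0) ↔ ψ ∈ catSpan k α) ∧
       ((∀ n, Lcoef k α ψ n = 0) ↔
         ∀ n : ℕ, ψ (n + k) = (α : ℂ) ^ k * ψ n / ((Real.sqrt (riseR k n) : ℝ) : ℂ)))) ∧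
    Module.finrank ℂ (catSpan k α) = k := by
  constructor
  · intro ψ _
    have hiff2 : (∀ n, Lcoef k α ψ n = 0) ↔
        ∀ n : ℕ, (ψ : ℕ → ℂ) (n + k)
          = (α : ℂ) ^ k * (ψ : ℕ → ℂ) n / ((Real.sqrt (riseR k n) : ℝ) : ℂ) :=
      lcoef_zero_iff k α ψ
    refine ⟨?_, hiff2⟩
    constructor
    · -- forward: kernel implies in span
      intro hL
      have hunit := Vmat_det_isUnit k α hα
      set w : Fin k → ℂ := fun i => (ψ : ℕ → ℂ) (i : ℕ) with hw
      set c : Fin k → ℂ := (Vmat k α)⁻¹.mulVec w with hc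
      have hVc : (Vmat k α).mulVec c = w := by
        rw [hc, Matrix.mulVec_mulVec, Matrix.mul_nonsing_inv _ hunit, Matrix.one_mulVec]
      set φ : H := ∑ m, c m • coh (catAmp k α m) with hφ
      have hφmem : φ ∈ catSpan k α := by
        refine Submodule.sum_mem _ fun m _ => Submodule.smul_mem _ _ ?_
        exact Submodule.subset_span ⟨m, rfl⟩
      have hψφ : ψ = φ := by
        apply lp.ext
        funext n
        have hdz : ∀ n, (ψ : ℕ → ℂ) n - (φ : ℕ → ℂ) n = 0 := by
          apply zero_of_rec k hk α
          · intro n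
            have h1 := (lcoef_zero_iff k α ψ).mp hL n
            have h2 : (φ : ℕ → ℂ) (n + k)
                = (α : ℂ) ^ k * (φ : ℕ → ℂ) n / ((Real.sqrt (riseR k n) : ℝ) : ℂ) := by
              rw [hφ, sum_coh_apply, sum_coh_apply, Finset.mul_sum, Finset.sum_div]
              refine Finset.sum_congr rfl fun m _ => ?_
              rw [cohCoeff_rec, catAmp_pow k hk α m]
              ring
            rw [h1, h2]
            ring
          · intro i hi
            have hVci := congrFun hVc ⟨i, hi⟩
            rw [Matrix.mulVec, dotProduct] at hVci
            have hwi : w ⟨i, hi⟩ = (ψ : ℕ → ℂ) i := rfl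
            rw [hwi] at hVci
            have hφi : (φ : ℕ → ℂ) i = ∑ m, c m * cohCoeff (catAmp k α m) i := by
              rw [hφ, sum_coh_apply]
            rw [sub_eq_zero, hφi, ← hVci]
            refine Finset.sum_congr rfl fun m _ => ?_
            show Vmat k α ⟨i, hi⟩ m * c m = c m * cohCoeff (catAmp k α m) i
            show cohCoeff (catAmp k α m) i * c m = _
            ring
        have := hdz n
        rw [sub_eq_zero] at this
        exact this
      rw [hψφ]
      exact hφmem
    · -- backward: span implies kernel
      intro hmem
      have key : ∀ (x : H), x ∈ catSpan k α → ∀ n, Lcoef k α x n = 0 := by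
        intro x hx
        refine Submodule.span_induction ?_ ?_ ?_ ?_ hx
        · rintro y ⟨m, rfl⟩ n
          exact coh_mem_ker k hk α m n
        · intro n
          rw [Lcoef_eq, lp.coeFn_zero]
          simp
        · intro x y _ _ hpx hpy n
          rw [Lcoef_eq, lp.coeFn_add, Pi.add_apply, Pi.add_apply]
          have h1 := hpx n
          have h2 := hpy n
          rw [Lcoef_eq] at h1 h2
          linear_combination h1 + h2
        · intro a x _ hpx n
          rw [Lcoef_eq, lp.coeFn_smul, Pi.smul_apply, Pi.smul_apply, smul_eq_mul,
            smul_eq_mul]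
          have h1 := hpx n
          rw [Lcoef_eq] at h1
          linear_combination a * h1
      exact key ψ hmem
  · rw [catSpan, finrank_span_eq_card (coh_linearIndependent k α hα), Fintype.card_fin]


end
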